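/- Let E be the sign-deletion graph on tuples of signs and for t ∈ ℤ let V_t be the set of tuples admitting a path to f_t if t ≥ 0, respectively to −f_{−t} if t < 0 (f_t the alternating tuple of length t; f₀ the empty tuple, so V₀ and V_{−0} coincide). If e →^i e' is an edge of E, then for every t: e ∈ V_t if and only if e' ∈ V_t. -/

import Mathlib

/-- The alternating sign tuple `f_t = (1, −1, 1, …, (−1)^{t−1})`, with `+1 = true`. -/
def falt (t : ℕ) : List Bool := (List.range t).map fun j => decide (j % 2 = 0)

/-- Negation of a sign tuple. -/
def negT (l : List Bool) : List Bool := l.map not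

/-- `Edge l i l'`: the edge labeled `i` (1-indexed) of the sign-deletion graph; it requires
`1 ≤ i ≤ k−1`, `e_i = e_{i+1}`, and deletes the `i`-th and `(i+1)`-th entries of `l`. -/
def Edge (l : List Bool) (i : ℕ) (l' : List Bool) : Prop :=
  1 ≤ i ∧ i + 1 ≤ l.length ∧ l[i - 1]? = l[i]? ∧ l' = l.take (i - 1) ++ l.drop (i + 1)

/-- `PathP l pat l'`: a path from `l` to `l'` in the sign-deletion graph whose sequence
of edge labels (its pattern) is `pat`. -/
inductive PathP : List Bool → List ℕ → List Bool → Prop where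
  | nil (l : List Bool) : PathP l [] l
  | cons {l l' l'' : List Bool} {i : ℕ} {is : List ℕ} :
      Edge l i l' → PathP l' is l'' → PathP l (i :: is) l''

/-- The terminal vertex `sign(t)·f_{|t|}` attached to `t ∈ ℤ`. -/
def target (t : ℤ) : List Bool := if 0 ≤ t then falt t.toNat else negT (falt (-t).toNat)

/-- `V_t`: the set of sign tuples admitting a path to `sign(t)·f_{|t|}`. -/
def Vmem (t : ℤ) (l : List Bool) : Prop := ∃ pat : List ℕ, PathP l pat (target t)

/-! ### Auxiliary development

We build an invariant: each sign acts on `ℤ` by an involutive affine map (`true` acts by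
`x ↦ -x`, `false` by `x ↦ 2 - x`), giving a faithful "infinite dihedral" invariant which,
together with the length parity, separates the alternating normal forms. -/

def act (b : Bool) (x : ℤ) : ℤ := if b then -x else 2 - x

lemma act_act (b : Bool) (x : ℤ) : act b (act b x) = x := by
  cases b <;> simp [act]

def ev (l : List Bool) : ℤ := l.foldr act 0

lemma falt_succ (n : ℕ) : falt (n + 1) = true :: negT (falt n) := by
  simp only [falt, negT, List.range_succ_eq_map, List.map_cons, List.map_map]
  congr 1
  apply List.map_congr_left
  intro j _
  rcases Nat.mod_two_eq_zero_or_one j with h | h <;>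
    simp [Function.comp, Nat.succ_mod_two_eq_zero_iff, Nat.succ_mod_two_eq_one_iff, h]

lemma negT_negT (l : List Bool) : negT (negT l) = l := by
  have h : (not ∘ not) = id := by funext b; cases b <;> rfl
  simp [negT, List.map_map, h]

lemma negT_falt_succ (n : ℕ) : negT (falt (n + 1)) = false :: falt n := by
  rw [falt_succ, negT, List.map_cons, ← negT, negT_negT]
  rfl

lemma falt_length (n : ℕ) : (falt n).length = n := by simp [falt]

lemma negT_length (l : List Bool) : (negT l).length = l.length := by simp [negT]

lemma ev_falt (n : ℕ) :
    ev (falt n) = -2 * (n / 2 : ℕ) ∧ ev (negT (falt n)) = 2 * ((n + 1) / 2 : ℕ) := by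
  induction n with
  | zero => simp [ev, falt, negT]
  | succ n ih =>
    constructor
    · rw [falt_succ]
      have h1 : ev (true :: negT (falt n)) = act true (ev (negT (falt n))) := rfl
      rw [h1, ih.2]
      simp [act]
    · rw [negT_falt_succ]
      have h1 : ev (false :: falt n) = act false (ev (falt n)) := rfl
      rw [h1, ih.1]
      have h2 : ((n + 1 + 1) / 2 : ℕ) = (n / 2 : ℕ) + 1 := by omega
      rw [h2]
      simp [act]
      omega

lemma edge_inv {l : List Bool} {i : ℕ} {l' : List Bool} (h : Edge l i l') :
    ev l = ev l' ∧ l.length = l'.length + 2 := by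
  obtain ⟨h1, h2, h3, h4⟩ := h
  have hi1 : i - 1 < l.length := by omega
  have hi : i < l.length := by omega
  have hb : l[i - 1] = l[i] := by
    rw [List.getElem?_eq_getElem hi1, List.getElem?_eq_getElem hi] at h3
    exact Option.some_injective _ h3
  have hdrop : l.drop (i - 1) = l[i - 1] :: l[i - 1] :: l.drop (i + 1) := by
    rw [List.drop_eq_getElem_cons hi1]
    congr 1
    have hsub : i - 1 + 1 = i := by omega
    rw [hsub, List.drop_eq_getElem_cons hi, ← hb]
  have hl : l = l.take (i - 1) ++ l[i - 1] :: l[i - 1] :: l.drop (i + 1) := by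
    conv_lhs => rw [← List.take_append_drop (i - 1) l]
    rw [hdrop]
  constructor
  · conv_lhs => rw [ev, hl]
    rw [h4, ev, List.foldr_append, List.foldr_append]
    simp [act_act]
  · have e1 := congrArg List.length hl
    have e2 := congrArg List.length h4
    simp at e1 e2
    omega

lemma path_inv {l : List Bool} {pat : List ℕ} {l' : List Bool} (h : PathP l pat l') :
    ev l = ev l' ∧ l.length % 2 = l'.length % 2 := by
  induction h with
  | nil => exact ⟨rfl, rfl⟩
  | cons he _ ih =>
    have := edge_inv he
    exact ⟨this.1.trans ih.1, by omega⟩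

/-- Alternating lists are exactly `falt n` and `negT (falt n)`. -/
lemma alt_form {l : List Bool} (h : List.Chain' (· ≠ ·) l) :
    ∃ n, l = falt n ∨ l = negT (falt n) := by
  induction l with
  | nil => exact ⟨0, Or.inl rfl⟩
  | cons b l ih =>
    rw [List.Chain', List.isChain_cons] at h
    obtain ⟨n, hl | hl⟩ := ih h.2
    · cases n with
      | zero =>
        have : l = [] := hl
        subst this
        cases b
        · exact ⟨1, Or.inr rfl⟩
        · exact ⟨1, Or.inl rfl⟩
      | succ m =>
        have hhead : l.head? = some true := by rw [hl, falt_succ]; rfl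
        have hb : b = false := by
          have := h.1 true hhead
          cases b
          · rfl
          · simp at this
        refine ⟨m + 2, Or.inr ?_⟩
        rw [negT_falt_succ, hb, hl]
    · cases n with
      | zero =>
        have : l = [] := hl
        subst this
        cases b
        · exact ⟨1, Or.inr rfl⟩
        · exact ⟨1, Or.inl rfl⟩
      | succ m =>
        have hhead : l.head? = some false := by rw [hl, negT_falt_succ]; rfl
        have hb : b = true := by
          have := h.1 false hhead
          cases b
          · simp at this
          · rfl
        refine ⟨m + 2, Or.inl ?_⟩
        rw [falt_succ, hb, hl]

/-- Every list has a path to some alternating normal form. -/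
lemma exists_nf (l : List Bool) :
    ∃ pat r, PathP l pat r ∧ ∃ n, r = falt n ∨ r = negT (falt n) := by
  by_cases hc : List.Chain' (· ≠ ·) l
  · exact ⟨[], l, PathP.nil l, alt_form hc⟩
  · rw [List.Chain', List.isChain_iff_getElem] at hc
    push_neg at hc
    obtain ⟨j, hj, hjeq⟩ := hc
    have hjeq' : l[j]'(by omega) = l[j + 1]'(by omega) := by simpa using hjeq
    set l' := l.take j ++ l.drop (j + 2) with hl'
    have hedge : Edge l (j + 1) l' := by
      refine ⟨by omega, by omega, ?_, by simp [hl']⟩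
      simp only [Nat.add_sub_cancel]
      rw [List.getElem?_eq_getElem (by omega), List.getElem?_eq_getElem (by omega)]
      exact congrArg some hjeq'
    have hlen : l'.length < l.length := by
      have := (edge_inv hedge).2
      omega
    obtain ⟨pat, r, hp, hnf⟩ := exists_nf l'
    exact ⟨(j + 1) :: pat, r, PathP.cons hedge hp, hnf⟩
termination_by l.length

/-- Injectivity of the invariant on alternating lists. -/
lemma alt_inj {x y : List Bool}
    (hx : ∃ n, x = falt n ∨ x = negT (falt n))
    (hy : ∃ n, y = falt n ∨ y = negT (falt n))
    (hev : ev x = ev y) (hlen : x.length % 2 = y.length % 2) : x = y := by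
  obtain ⟨n, hx | hx⟩ := hx <;> obtain ⟨m, hy | hy⟩ := hy <;> subst hx <;> subst hy <;>
    simp only [falt_length, negT_length] at hlen
  · rw [(ev_falt n).1, (ev_falt m).1] at hev
    have : n = m := by omega
    rw [this]
  · rw [(ev_falt n).1, (ev_falt m).2] at hev
    have hn : n = 0 := by omega
    have hm : m = 0 := by omega
    subst hn; subst hm; rfl
  · rw [(ev_falt n).2, (ev_falt m).1] at hev
    have hn : n = 0 := by omega
    have hm : m = 0 := by omega
    subst hn; subst hm; rfl
  · rw [(ev_falt n).2, (ev_falt m).2] at hev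
    have : n = m := by omega
    rw [this]

/-- if `e → e'` is an edge of the sign-deletion graph then, for every
`t ∈ ℤ`, `e ∈ V_t` if and only if `e' ∈ V_t`. -/
theorem stmt_10 (e e' : List Bool) (i : ℕ) (h : Edge e i e') (t : ℤ) :
    Vmem t e ↔ Vmem t e' := by
  constructor
  · rintro ⟨pat, hp⟩
    obtain ⟨pat', r, hp', hnf⟩ := exists_nf e'
    have h1 := path_inv hp
    have h2 := path_inv hp'
    have h3 := edge_inv h
    have htarg : ∃ n, target t = falt n ∨ target t = negT (falt n) := by
      unfold target
      split
      · exact ⟨t.toNat, Or.inl rfl⟩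
      · exact ⟨(-t).toNat, Or.inr rfl⟩
    have hrt : r = target t := by
      apply alt_inj hnf htarg
      · rw [← h2.1, ← h3.1, h1.1]
      · omega
    exact ⟨pat', hrt ▸ hp'⟩
  · rintro ⟨pat, hp⟩
    exact ⟨i :: pat, PathP.cons h hp⟩
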